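/- For an invertible N×N matrix J̄, the scaled second cofactors satisfy Jacobi's identity: [J̄]^{pq,rs}/det(J̄) = ([J̄]^{p,r}/det J̄)([J̄]^{q,s}/det J̄) − ([J̄]^{p,s}/det J̄)([J̄]^{q,r}/det J̄), where [J̄]^{p,r} = (−1)^{p+r} det J̄^{p,r} is the first cofactor (J̄^{p,r} deletes row p and column r) and [J̄]^{pq,rs} = (−1)^{p+q+r+s+h(p,q)+h(r,s)} det J̄^{pq,rs} is the second cofactor with h(p,q)=1 if p>q and 0 if p<q. -/

import Mathlib

open Matrix

lemma compl_pair_card {n : ℕ} {p q : Fin (n + 2)} (h : p ≠ q) :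
    ({p, q}ᶜ : Finset (Fin (n + 2))).card = n := by
  rw [Finset.card_compl, Finset.card_insert_of_notMem (by simpa using h),
    Finset.card_singleton]
  simp

/-- The (N−1)×(N−1) submatrix deleting row p and column r. -/
def delOne {n : ℕ} (J : Matrix (Fin (n + 1)) (Fin (n + 1)) ℂ) (p r : Fin (n + 1)) :
    Matrix (Fin n) (Fin n) ℂ :=
  J.submatrix p.succAbove r.succAbove

/-- First cofactor [J]^{p,r} = (−1)^{p+r} det J^{p,r}. -/
def cof1 {n : ℕ} (J : Matrix (Fin (n + 1)) (Fin (n + 1)) ℂ) (p r : Fin (n + 1)) : ℂ :=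
  (-1 : ℂ) ^ ((p : ℕ) + (r : ℕ)) * (delOne J p r).det

/-- The (N−2)×(N−2) submatrix deleting rows p,q and columns r,s. -/
def delTwo {n : ℕ} (J : Matrix (Fin (n + 2)) (Fin (n + 2)) ℂ)
    (p q r s : Fin (n + 2)) (hpq : p ≠ q) (hrs : r ≠ s) :
    Matrix (Fin n) (Fin n) ℂ :=
  J.submatrix
    (fun i => (({p, q}ᶜ : Finset (Fin (n + 2))).orderIsoOfFin (compl_pair_card hpq) i : Fin (n + 2)))
    (fun j => (({r, s}ᶜ : Finset (Fin (n + 2))).orderIsoOfFin (compl_pair_card hrs) j : Fin (n + 2)))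

/-- h(p,q) = 1 if p > q, 0 if p < q. -/
def hsgn {m : ℕ} (p q : Fin m) : ℕ := if q < p then 1 else 0

/-- Second cofactor [J]^{pq,rs} = (−1)^{p+q+r+s+h(p,q)+h(r,s)} det J^{pq,rs}. -/
def cof2 {n : ℕ} (J : Matrix (Fin (n + 2)) (Fin (n + 2)) ℂ)
    (p q r s : Fin (n + 2)) (hpq : p ≠ q) (hrs : r ≠ s) : ℂ :=
  (-1 : ℂ) ^ ((p : ℕ) + (q : ℕ) + (r : ℕ) + (s : ℕ) + hsgn p q + hsgn r s) *
    (delTwo J p q r s hpq hrs).det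

section AuxJacobi

variable {n : ℕ}

lemma frontPerm_exists (p q : Fin (n + 2)) (hpq : p ≠ q) :
    ∃ ρ : Equiv.Perm (Fin (n + 2)),
      ρ 0 = p ∧ ρ 1 = q ∧
      (∀ k : Fin n, ρ k.succ.succ =
        (({p, q}ᶜ : Finset (Fin (n + 2))).orderIsoOfFin (compl_pair_card hpq) k : Fin (n + 2))) ∧
      Equiv.Perm.sign ρ = (-1 : ℤˣ) ^ ((p : ℕ) + (q : ℕ) + hsgn p q + 1) := by
  obtain ⟨q₁, hq₁⟩ := Fin.exists_succAbove_eq hpq.symm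
  set σ : Equiv.Perm (Fin (n + 1)) := (Fin.cycleRange q₁)⁻¹ with hσ
  refine ⟨(Fin.cycleRange p)⁻¹ * Equiv.Perm.decomposeFin.symm (0, σ), ?_, ?_, ?_, ?_⟩
  case _ =>
    simp only [Equiv.Perm.mul_apply, Equiv.Perm.decomposeFin_symm_apply_zero]
    rw [Equiv.Perm.inv_eq_iff_eq, Fin.cycleRange_self]
  case _ =>
    rw [← Fin.succ_zero_eq_one, Equiv.Perm.mul_apply,
      Equiv.Perm.decomposeFin_symm_apply_succ]
    have h0 : σ 0 = q₁ := by
      rw [hσ, Equiv.Perm.inv_eq_iff_eq, Fin.cycleRange_self]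
    rw [h0]
    simp only [Equiv.swap_self, Equiv.refl_apply]
    rw [Equiv.Perm.inv_eq_iff_eq, ← hq₁, Fin.cycleRange_succAbove]
  case _ =>
    have hmain : ∀ k : Fin n,
        ((Fin.cycleRange p)⁻¹ * Equiv.Perm.decomposeFin.symm (0, σ)) k.succ.succ
          = p.succAbove (q₁.succAbove k) := by
      intro k
      rw [Equiv.Perm.mul_apply, Equiv.Perm.decomposeFin_symm_apply_succ]
      have h1 : σ k.succ = q₁.succAbove k := by
        rw [hσ, Equiv.Perm.inv_eq_iff_eq, Fin.cycleRange_succAbove]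
      rw [h1]
      simp only [Equiv.swap_self, Equiv.refl_apply]
      rw [Equiv.Perm.inv_eq_iff_eq, Fin.cycleRange_succAbove]
    intro k
    rw [hmain k]
    have huniq : (fun k : Fin n => p.succAbove (q₁.succAbove k))
        = ({p, q}ᶜ : Finset (Fin (n + 2))).orderEmbOfFin (compl_pair_card hpq) := by
      apply Finset.orderEmbOfFin_unique
      · intro x
        simp only [Finset.mem_compl, Finset.mem_insert, Finset.mem_singleton, not_or]
        constructor
        · exact Fin.succAbove_ne p _
        · rw [← hq₁]
          intro hcon
          exact Fin.succAbove_ne q₁ x ((Fin.succAbove_right_injective) hcon)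
      · exact (Fin.strictMono_succAbove p).comp (Fin.strictMono_succAbove q₁)
    rw [Finset.coe_orderIsoOfFin_apply, ← huniq]
  case _ =>
    rw [_root_.map_mul, map_inv, Fin.sign_cycleRange, Equiv.Perm.decomposeFin.symm_sign,
      if_pos rfl, one_mul, hσ, map_inv, Fin.sign_cycleRange]
    have hpar : ((p : ℕ) + (q₁ : ℕ)) % 2 = ((p : ℕ) + (q : ℕ) + hsgn p q + 1) % 2 := by
      rcases lt_or_ge (Fin.castSucc q₁) p with h | h
      · have : q = Fin.castSucc q₁ := by rw [← hq₁, Fin.succAbove_of_castSucc_lt p q₁ h]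
        have hq : (q : ℕ) = (q₁ : ℕ) := by rw [this]; rfl
        have hlt : q < p := by rw [this]; exact h
        have : hsgn p q = 1 := if_pos hlt
        omega
      · have : q = Fin.succ q₁ := by rw [← hq₁, Fin.succAbove_of_le_castSucc p q₁ h]
        have hq : (q : ℕ) = (q₁ : ℕ) + 1 := by rw [this]; rfl
        have hlt : ¬ q < p := by
          rw [not_lt, this]
          exact le_of_lt (lt_of_le_of_lt h (Fin.castSucc_lt_succ (i := q₁)))
        have : hsgn p q = 0 := if_neg hlt
        omega
    have hinv : ∀ m : ℕ, ((-1 : ℤˣ) ^ m)⁻¹ = (-1 : ℤˣ) ^ m := by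
      intro m
      rw [← inv_pow, show ((-1 : ℤˣ)⁻¹ = -1) by decide]
    have hmod : ∀ m : ℕ, (-1 : ℤˣ) ^ m = (-1) ^ (m % 2) := by
      intro m
      conv_lhs => rw [← Nat.div_add_mod m 2]
      rw [pow_add, pow_mul, show ((-1 : ℤˣ) ^ 2 = 1) by decide, one_pow, one_mul]
    rw [hinv, hinv, ← pow_add, hmod, hpar, ← hmod]

end AuxJacobi

/-- Jacobi's identity for scaled second cofactors of an invertible matrix. -/
theorem jacobi_second_cofactor_identity
    {n : ℕ} (J : Matrix (Fin (n + 2)) (Fin (n + 2)) ℂ) (hJ : IsUnit J.det)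
    (p q r s : Fin (n + 2)) (hpq : p ≠ q) (hrs : r ≠ s) :
    cof2 J p q r s hpq hrs / J.det =
      (cof1 J p r / J.det) * (cof1 J q s / J.det) -
        (cof1 J p s / J.det) * (cof1 J q r / J.det) := by
  obtain ⟨ρr, hr0, hr1, hrk, hrsgn⟩ := frontPerm_exists p q hpq
  obtain ⟨ρc, hc0, hc1, hck, hcsgn⟩ := frontPerm_exists r s hrs
  have hd : J.det ≠ 0 := hJ.ne_zero
  have hA : J * J⁻¹ = 1 := mul_nonsing_inv J hJ
  set ι : Fin 2 ⊕ Fin n ≃ Fin (n + 2) := finSumFinEquiv.trans (finCongr (by omega)) with hι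
  have hι0 : ι (Sum.inl 0) = 0 := by
    apply Fin.ext; simp [hι]
  have hι1 : ι (Sum.inl 1) = 1 := by
    apply Fin.ext; simp [hι]
  have hιr : ∀ k : Fin n, ι (Sum.inr k) = k.succ.succ := by
    intro k; apply Fin.ext; simp [hι]
  set er : Fin 2 ⊕ Fin n ≃ Fin (n + 2) := ι.trans ρr with her
  set ec : Fin 2 ⊕ Fin n ≃ Fin (n + 2) := ι.trans ρc with hec
  set M : Matrix (Fin 2 ⊕ Fin n) (Fin 2 ⊕ Fin n) ℂ := J.submatrix er ec with hM
  set N : Matrix (Fin 2 ⊕ Fin n) (Fin 2 ⊕ Fin n) ℂ := (J⁻¹).submatrix ec er with hN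
  have hMN : M * N = 1 := by
    rw [hM, hN, submatrix_mul_equiv, hA, submatrix_one_equiv]
  -- block equations
  have hMN' : Matrix.fromBlocks
      (M.toBlocks₁₁ * N.toBlocks₁₁ + M.toBlocks₁₂ * N.toBlocks₂₁)
      (M.toBlocks₁₁ * N.toBlocks₁₂ + M.toBlocks₁₂ * N.toBlocks₂₂)
      (M.toBlocks₂₁ * N.toBlocks₁₁ + M.toBlocks₂₂ * N.toBlocks₂₁)
      (M.toBlocks₂₁ * N.toBlocks₁₂ + M.toBlocks₂₂ * N.toBlocks₂₂)
      = Matrix.fromBlocks 1 0 0 1 := by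
    rw [← Matrix.fromBlocks_multiply, Matrix.fromBlocks_toBlocks, Matrix.fromBlocks_toBlocks,
      hMN, Matrix.fromBlocks_one]
  have e11 : M.toBlocks₁₁ * N.toBlocks₁₁ + M.toBlocks₁₂ * N.toBlocks₂₁ = 1 := by
    have h := congrArg Matrix.toBlocks₁₁ hMN'
    simpa only [Matrix.toBlocks_fromBlocks₁₁, Matrix.toBlocks_fromBlocks₂₁] using h
  have e21 : M.toBlocks₂₁ * N.toBlocks₁₁ + M.toBlocks₂₂ * N.toBlocks₂₁ = 0 := by
    have h := congrArg Matrix.toBlocks₂₁ hMN'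
    simpa only [Matrix.toBlocks_fromBlocks₁₁, Matrix.toBlocks_fromBlocks₂₁] using h
  have key : M * Matrix.fromBlocks N.toBlocks₁₁ 0 N.toBlocks₂₁ 1
      = Matrix.fromBlocks 1 M.toBlocks₁₂ 0 M.toBlocks₂₂ := by
    conv_lhs => rw [← Matrix.fromBlocks_toBlocks M]
    rw [Matrix.fromBlocks_multiply]
    simp only [Matrix.mul_zero, Matrix.mul_one, zero_add, add_zero, e11, e21]
  have hdetkey : M.det * (N.toBlocks₁₁).det = (M.toBlocks₂₂).det := by
    have h := congrArg Matrix.det key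
    rwa [Matrix.det_mul, Matrix.det_fromBlocks_zero₁₂, Matrix.det_fromBlocks_zero₂₁,
      Matrix.det_one, Matrix.det_one, mul_one, one_mul] at h
  -- determinant of M via permutation signs
  have hdetM : M.det = ((Equiv.Perm.sign ρr : ℤ) : ℂ) * ((Equiv.Perm.sign ρc : ℤ) : ℂ) * J.det := by
    have h1 : M = ((J.submatrix id ρc).submatrix ρr id).submatrix ι ι := by
      ext i j
      simp [hM, her, hec]
    rw [h1, det_submatrix_equiv_self, det_permute, det_permute']
    ring
  have hsr : ((Equiv.Perm.sign ρr : ℤ) : ℂ)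
      = (-1 : ℂ) ^ ((p : ℕ) + (q : ℕ) + hsgn p q + 1) := by
    rw [hrsgn]; push_cast; ring
  have hsc : ((Equiv.Perm.sign ρc : ℤ) : ℂ)
      = (-1 : ℂ) ^ ((r : ℕ) + (s : ℕ) + hsgn r s + 1) := by
    rw [hcsgn]; push_cast; ring
  -- the bottom-right block is delTwo
  have hB : M.toBlocks₂₂ = delTwo J p q r s hpq hrs := by
    ext k l
    simp only [Matrix.toBlocks₂₂, hM, Matrix.submatrix_apply, Matrix.of_apply, her, hec,
      Equiv.trans_apply, hιr, hrk, hck, delTwo]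
  -- inverse entries are scaled cofactors
  have hinv : ∀ x y : Fin (n + 2), J⁻¹ x y = cof1 J y x / J.det := by
    intro x y
    rw [Matrix.inv_def, Ring.inverse_eq_inv']
    simp only [Matrix.smul_apply, smul_eq_mul]
    rw [Matrix.adjugate_fin_succ_eq_det_submatrix]
    unfold cof1 delOne
    field_simp
    try ring
  -- the top-left block of N
  have hS : (N.toBlocks₁₁).det = J⁻¹ r p * J⁻¹ s q - J⁻¹ r q * J⁻¹ s p := by
    rw [Matrix.det_fin_two]
    have h00 : N.toBlocks₁₁ 0 0 = J⁻¹ r p := by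
      simp [Matrix.toBlocks₁₁, hN, hec, her, hι0, hr0, hc0]
    have h01 : N.toBlocks₁₁ 0 1 = J⁻¹ r q := by
      simp [Matrix.toBlocks₁₁, hN, hec, her, hι0, hι1, hr1, hc0]
    have h10 : N.toBlocks₁₁ 1 0 = J⁻¹ s p := by
      simp [Matrix.toBlocks₁₁, hN, hec, her, hι0, hι1, hr0, hc1]
    have h11 : N.toBlocks₁₁ 1 1 = J⁻¹ s q := by
      simp [Matrix.toBlocks₁₁, hN, hec, her, hι1, hr1, hc1]
    rw [h00, h01, h10, h11]
  -- assemble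
  have hdt : (delTwo J p q r s hpq hrs).det
      = (-1 : ℂ) ^ ((p : ℕ) + (q : ℕ) + hsgn p q + 1)
        * (-1 : ℂ) ^ ((r : ℕ) + (s : ℕ) + hsgn r s + 1) * J.det
        * (J⁻¹ r p * J⁻¹ s q - J⁻¹ r q * J⁻¹ s p) := by
    rw [← hB, ← hdetkey, hdetM, hsr, hsc, hS]
  rw [cof2, hdt, hinv r p, hinv s q, hinv r q, hinv s p]
  set A := (-1 : ℂ) ^ ((p : ℕ) + (q : ℕ) + (r : ℕ) + (s : ℕ) + hsgn p q + hsgn r s) with hAdef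
  set B := (-1 : ℂ) ^ ((p : ℕ) + (q : ℕ) + hsgn p q + 1) with hBdef
  set C := (-1 : ℂ) ^ ((r : ℕ) + (s : ℕ) + hsgn r s + 1) with hCdef
  have hone : A * (B * C) = 1 := by
    rw [hAdef, hBdef, hCdef, ← pow_add, ← pow_add,
      show (p : ℕ) + (q : ℕ) + (r : ℕ) + (s : ℕ) + hsgn p q + hsgn r s
          + ((p : ℕ) + (q : ℕ) + hsgn p q + 1 + ((r : ℕ) + (s : ℕ) + hsgn r s + 1))
        = 2 * ((p : ℕ) + (q : ℕ) + (r : ℕ) + (s : ℕ) + hsgn p q + hsgn r s + 1) by ring,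
      pow_mul]
    norm_num
  have key2 : ∀ T : ℂ, A * (B * C * J.det * T) / J.det = T := by
    intro T
    rw [show A * (B * C * J.det * T) = (A * (B * C)) * (J.det * T) by ring, hone, one_mul,
      mul_div_cancel_left₀ _ hd]
  rw [key2]
  ring
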